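/- There exist ε > 0 and R₀ > 1/ε¹⁰ such that for all R > R₀: for every w ∈ K⁺ there is a constant M̃(w) > 1 with Mₙ ≤ M̃(w)^{(√3)ⁿ} for all n ≥ 0; consequently, for every w ∈ K⁺ there is a constant C(w) > 1 such that ‖Hⁿ(w)‖ ≤ C(w)^{(√3)ⁿ} for all n ≥ 0. -/

import Mathlib

open Complex Filter Topology

/-- The quadratic automorphism `H(x,y,z) = (xy + az, x² + by, x)` of `ℂ³`. -/
noncomputable def H (a b : ℂ) (w : ℂ × ℂ × ℂ) : ℂ × ℂ × ℂ :=
  (w.1 * w.2.1 + a * w.2.2, w.1 ^ 2 + b * w.2.1, w.1)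

/-- `V⁻ = {(x,y,z) : |xy| > max{R, 2|az|, |x|^{3/2}, (1/ε)|y|^{3/2}}}`. -/
noncomputable def Vminus (a : ℂ) (ε R : ℝ) : Set (ℂ × ℂ × ℂ) :=
  {w | ‖w.1 * w.2.1‖ >
    max R (max (2 * ‖a * w.2.2‖)
      (max (‖w.1‖ ^ ((3 : ℝ) / 2))
        ((1 / ε) * ‖w.2.1‖ ^ ((3 : ℝ) / 2))))}

/-- `U⁺ = ⋃_{n≥0} H⁻ⁿ(V⁻)`, i.e. the points whose forward orbit meets `V⁻`. -/
noncomputable def Uplus (a b : ℂ) (ε R : ℝ) : Set (ℂ × ℂ × ℂ) :=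
  ⋃ n : ℕ, (H a b)^[n] ⁻¹' Vminus a ε R

/-- `K⁺ = ℂ³ \ U⁺`. -/
noncomputable def Kplus (a b : ℂ) (ε R : ℝ) : Set (ℂ × ℂ × ℂ) :=
  (Uplus a b ε R)ᶜ

/-- `Mₙ = max{R, 2|azₙ|, |xₙ|^{3/2}, (1/ε)|yₙ|^{3/2}}` where `Hⁿ(w) = (xₙ,yₙ,zₙ)`. -/
noncomputable def Mseq (a b : ℂ) (ε R : ℝ) (w : ℂ × ℂ × ℂ) (n : ℕ) : ℝ :=
  max R (max (2 * ‖a * ((H a b)^[n] w).2.2‖)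
    (max (‖((H a b)^[n] w).1‖ ^ ((3 : ℝ) / 2))
      ((1 / ε) * ‖((H a b)^[n] w).2.1‖ ^ ((3 : ℝ) / 2))))


lemma aux_pow23 {t M : ℝ} (ht : 0 ≤ t) (h : t ^ ((3:ℝ)/2) ≤ M) : t ≤ M ^ ((2:ℝ)/3) := by
  have h1 : t = (t ^ ((3:ℝ)/2)) ^ ((2:ℝ)/3) := by
    rw [← Real.rpow_mul ht]; norm_num
  rw [h1]
  exact Real.rpow_le_rpow (Real.rpow_nonneg ht _) h (by norm_num)

lemma aux_le_of_pow32 {t M : ℝ} (ht : 0 ≤ t) (hM : 1 ≤ M) (h : t ^ ((3:ℝ)/2) ≤ M) : t ≤ M := by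
  calc t ≤ M ^ ((2:ℝ)/3) := aux_pow23 ht h
    _ ≤ M ^ (1:ℝ) := Real.rpow_le_rpow_of_exponent_le hM (by norm_num)
    _ = M := Real.rpow_one M

lemma aux_rpow32_le {t c : ℝ} (ht : 0 ≤ t) (hc : 0 ≤ c) (h : t ^ 3 ≤ c ^ 2) :
    t ^ ((3:ℝ)/2) ≤ c := by
  have h1 : (t ^ ((3:ℝ)/2)) ^ 2 = t ^ 3 := by
    rw [← Real.rpow_natCast (t ^ ((3:ℝ)/2)) 2, ← Real.rpow_mul ht, ← Real.rpow_natCast t 3]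
    norm_num
  refine (pow_le_pow_iff_left₀ (Real.rpow_nonneg ht _) hc (by norm_num : (2:ℕ) ≠ 0)).mp ?_
  rw [h1]; exact h

lemma aux_sq23 {u : ℝ} (hu : 0 ≤ u) : (u ^ ((2:ℝ)/3)) ^ 2 = u ^ ((4:ℝ)/3) := by
  rw [← Real.rpow_natCast (u ^ ((2:ℝ)/3)) 2, ← Real.rpow_mul hu]; norm_num

lemma aux_pow43cube {u : ℝ} (hu : 0 ≤ u) : (u ^ ((4:ℝ)/3)) ^ 3 = u ^ 4 := by
  rw [← Real.rpow_natCast (u ^ ((4:ℝ)/3)) 3, ← Real.rpow_mul hu, ← Real.rpow_natCast u 4]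
  norm_num

lemma aux_43_le_sq {M : ℝ} (hM : 1 ≤ M) : M ^ ((4:ℝ)/3) ≤ M ^ 2 := by
  calc M ^ ((4:ℝ)/3) ≤ M ^ (2:ℝ) := Real.rpow_le_rpow_of_exponent_le hM (by norm_num)
    _ = M ^ 2 := by rw [← Real.rpow_natCast M 2]; norm_num

set_option maxHeartbeats 2000000 in
lemma growth (X Y Z M : ℕ → ℝ) (α β : ℝ) (hα : 0 ≤ α) (hβ : 0 ≤ β)
    (hX0 : ∀ n, 0 ≤ X n) (hY0 : ∀ n, 0 ≤ Y n) (hZ0 : ∀ n, 0 ≤ Z n)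
    (hM1 : ∀ n, 1 ≤ M n)
    (hXY : ∀ n, X n * Y n ≤ M n)
    (hZM : ∀ n, 2 * Z n ≤ M n)
    (hX32 : ∀ n, X n ^ ((3:ℝ)/2) ≤ M n)
    (hY32 : ∀ n, Y n ^ ((3:ℝ)/2) ≤ M n)
    (hXs : ∀ n, X (n+1) ≤ X n * Y n + Z n)
    (hYs : ∀ n, Y (n+1) ≤ X n ^ 2 + β * Y n)
    (hZs : ∀ n, Z (n+1) = α * X n)
    (hMle : ∀ n, M (n+1) ≤ max (M n) (max (2 * Z (n+1))
      (max (X (n+1) ^ ((3:ℝ)/2)) (Y (n+1) ^ ((3:ℝ)/2))))) :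
    ∃ T : ℝ, 2 ≤ T ∧ ∀ n, M n ≤ T ^ (Real.sqrt 3 ^ n) := by
  have hM0 : ∀ n, (0:ℝ) ≤ M n := fun n => le_trans zero_le_one (hM1 n)
  have hX23 : ∀ n, X n ≤ M n ^ ((2:ℝ)/3) := fun n => aux_pow23 (hX0 n) (hX32 n)
  have hY23 : ∀ n, Y n ≤ M n ^ ((2:ℝ)/3) := fun n => aux_pow23 (hY0 n) (hY32 n)
  have hXle : ∀ n, X n ≤ M n := fun n => aux_le_of_pow32 (hX0 n) (hM1 n) (hX32 n)
  have hXs' : ∀ n, X (n+1) ≤ 3/2 * M n := fun n => by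
    have h1 := hXs n; have h2 := hXY n; have h3 := hZM n; linarith
  have hsq : ∀ n, X n ^ 2 ≤ M n ^ ((4:ℝ)/3) := fun n => by
    have h := pow_le_pow_left₀ (hX0 n) (hX23 n) 2
    rwa [aux_sq23 (hM0 n)] at h
  have h2343 : ∀ n, M n ^ ((2:ℝ)/3) ≤ M n ^ ((4:ℝ)/3) := fun n =>
    Real.rpow_le_rpow_of_exponent_le (hM1 n) (by norm_num)
  have h43nn : ∀ n, (0:ℝ) ≤ M n ^ ((4:ℝ)/3) := fun n => Real.rpow_nonneg (hM0 n) _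
  have hYs' : ∀ n, Y (n+1) ≤ (1+β) * M n ^ ((4:ℝ)/3) := fun n => by
    have h1 := hYs n; have h2 := hsq n; have h3 := hY23 n; have h4 := h2343 n
    nlinarith [h43nn n]
  obtain ⟨B, hBdef⟩ : ∃ B:ℝ, B = 3 + 2*α + 2*(1+β)^2 := ⟨_, rfl⟩
  have hB1 : (1:ℝ) ≤ B := by rw [hBdef]; nlinarith
  have hB0 : (0:ℝ) ≤ B := by linarith
  have hB2a : 2*α ≤ B := by rw [hBdef]; nlinarith
  have hB2 : (2:ℝ) ≤ B := by rw [hBdef]; nlinarith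
  have hBy : 2*(1+β)^2 ≤ B := by rw [hBdef]; nlinarith
  have hstep1 : ∀ n, M (n+1) ≤ B * M n ^ 2 := by
    intro n
    have hM2 : M n ≤ M n ^ 2 := by nlinarith [hM1 n]
    have hMsq0 : (0:ℝ) ≤ M n ^ 2 := by positivity
    refine le_trans (hMle n) ?_
    apply max_le
    · nlinarith [hM1 n]
    apply max_le
    · rw [hZs n]
      calc 2 * (α * X n) ≤ 2 * α * M n := by nlinarith [hα, hXle n]
        _ ≤ B * M n := mul_le_mul_of_nonneg_right hB2a (hM0 n)
        _ ≤ B * M n ^ 2 := mul_le_mul_of_nonneg_left hM2 hB0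
    apply max_le
    · have h1 : X (n+1) ^ ((3:ℝ)/2) ≤ (3/2 * M n) ^ ((3:ℝ)/2) :=
        Real.rpow_le_rpow (hX0 (n+1)) (hXs' n) (by norm_num)
      have h2 : (3/2 * M n) ^ ((3:ℝ)/2) ≤ 2 * M n ^ 2 := by
        apply aux_rpow32_le (by nlinarith [hM0 n]) (by nlinarith)
        nlinarith [hM1 n, hM0 n]
      calc X (n+1) ^ ((3:ℝ)/2) ≤ 2 * M n ^ 2 := le_trans h1 h2
        _ ≤ B * M n ^ 2 := mul_le_mul_of_nonneg_right hB2 hMsq0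
    · have h1 : Y (n+1) ^ ((3:ℝ)/2) ≤ ((1+β) * M n ^ ((4:ℝ)/3)) ^ ((3:ℝ)/2) :=
        Real.rpow_le_rpow (hY0 (n+1)) (hYs' n) (by norm_num)
      have h2 : ((1+β) * M n ^ ((4:ℝ)/3)) ^ ((3:ℝ)/2) ≤ 2*(1+β)^2 * M n ^ 2 := by
        apply aux_rpow32_le (mul_nonneg (by linarith) (h43nn n)) (by positivity)
        rw [mul_pow, aux_pow43cube (hM0 n)]
        have e : (2*(1+β)^2 * M n ^ 2) ^ 2 = 4*((1+β)^4 * M n ^ 4) := by ring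
        rw [e]
        have hb3 : (1+β)^3 ≤ (1+β)^4 := pow_le_pow_right₀ (by linarith) (by norm_num)
        have hM24 : M n ^ 4 ≤ M n ^ 4 := le_refl _
        have key : (1+β)^3 * M n ^ 4 ≤ (1+β)^4 * M n ^ 4 :=
          mul_le_mul_of_nonneg_right hb3 (by positivity)
        nlinarith [mul_nonneg (pow_nonneg (by linarith : (0:ℝ) ≤ 1+β) 4) (pow_nonneg (hM0 n) 4)]
      calc Y (n+1) ^ ((3:ℝ)/2) ≤ 2*(1+β)^2 * M n ^ 2 := le_trans h1 h2
        _ ≤ B * M n ^ 2 := mul_le_mul_of_nonneg_right hBy hMsq0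
  obtain ⟨A, hAdef⟩ : ∃ A:ℝ, A = 2*B^2 + 3*α + 2*(9/4 + β + β^2)^2 := ⟨_, rfl⟩
  have hcb1 : (1:ℝ) ≤ 9/4 + β + β^2 := by nlinarith
  have hA1 : (1:ℝ) ≤ A := by rw [hAdef]; nlinarith [sq_nonneg (9/4+β+β^2)]
  have hA0 : (0:ℝ) ≤ A := by linarith
  have hAB : B ≤ A := by rw [hAdef]; nlinarith [sq_nonneg (9/4+β+β^2), sq_nonneg (B-1)]
  have hA3a : 3*α ≤ A := by rw [hAdef]; nlinarith [sq_nonneg B, sq_nonneg (9/4+β+β^2)]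
  have hA2B : 2*B^2 ≤ A := by rw [hAdef]; nlinarith [sq_nonneg (9/4+β+β^2)]
  have hAc : 2*(9/4 + β + β^2)^2 ≤ A := by rw [hAdef]; nlinarith [sq_nonneg B]
  have hstep2 : ∀ n, M (n+2) ≤ A * M n ^ 3 := by
    intro n
    have hM2 : M n ≤ M n ^ 2 := by nlinarith [hM1 n]
    have hM23 : M n ^ 2 ≤ M n ^ 3 := by nlinarith [hM1 n, hM0 n]
    have hM30 : (0:ℝ) ≤ M n ^ 3 := pow_nonneg (hM0 n) 3
    have hMsq0 : (0:ℝ) ≤ M n ^ 2 := by positivity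
    have hs1 := hstep1 n
    refine le_trans (hMle (n+1)) ?_
    apply max_le
    · calc M (n+1) ≤ B * M n ^ 2 := hs1
        _ ≤ B * M n ^ 3 := mul_le_mul_of_nonneg_left hM23 hB0
        _ ≤ A * M n ^ 3 := mul_le_mul_of_nonneg_right hAB hM30
    apply max_le
    · rw [hZs (n+1)]
      have h1 := hXs' n
      calc 2 * (α * X (n+1)) ≤ 3 * α * M n := by nlinarith [hα]
        _ ≤ A * M n := mul_le_mul_of_nonneg_right hA3a (hM0 n)
        _ ≤ A * M n ^ 3 := mul_le_mul_of_nonneg_left (by nlinarith [hM1 n, hM0 n]) hA0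
    apply max_le
    · have h1 : X (n+2) ^ ((3:ℝ)/2) ≤ (3/2 * (B * M n ^ 2)) ^ ((3:ℝ)/2) := by
        refine Real.rpow_le_rpow (hX0 (n+2)) ?_ (by norm_num)
        have h0 := hXs' (n+1)
        nlinarith
      have h2 : (3/2 * (B * M n ^ 2)) ^ ((3:ℝ)/2) ≤ 2*B^2 * M n ^ 3 := by
        apply aux_rpow32_le (by nlinarith [mul_nonneg hB0 hMsq0]) (mul_nonneg (by positivity) hM30)
        have e1 : (3/2 * (B * M n ^ 2)) ^ 3 = 27/8 * (B^3 * M n ^ 6) := by ring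
        have e2 : (2*B^2 * M n ^ 3) ^ 2 = 4 * (B^4 * M n ^ 6) := by ring
        rw [e1, e2]
        have hb3 : B^3 ≤ B^4 := pow_le_pow_right₀ hB1 (by norm_num)
        have key : B^3 * M n ^ 6 ≤ B^4 * M n ^ 6 :=
          mul_le_mul_of_nonneg_right hb3 (by positivity)
        nlinarith [mul_nonneg (pow_nonneg hB0 3) (pow_nonneg (hM0 n) 6)]
      calc X (n+2) ^ ((3:ℝ)/2) ≤ 2*B^2 * M n ^ 3 := le_trans h1 h2
        _ ≤ A * M n ^ 3 := mul_le_mul_of_nonneg_right hA2B hM30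
    · have hy2 : Y (n+2) ≤ (9/4 + β + β^2) * M n ^ 2 := by
        have h1 := hYs (n+1)
        have h2 : X (n+1) ^ 2 ≤ (3/2 * M n) ^ 2 := pow_le_pow_left₀ (hX0 (n+1)) (hXs' n) 2
        have h3 := hYs' n
        have h4 := aux_43_le_sq (hM1 n)
        nlinarith [h43nn n, hβ]
      have h1 : Y (n+2) ^ ((3:ℝ)/2) ≤ ((9/4 + β + β^2) * M n ^ 2) ^ ((3:ℝ)/2) :=
        Real.rpow_le_rpow (hY0 (n+2)) hy2 (by norm_num)
      have h2 : ((9/4 + β + β^2) * M n ^ 2) ^ ((3:ℝ)/2) ≤ 2*(9/4 + β + β^2)^2 * M n ^ 3 := by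
        apply aux_rpow32_le (mul_nonneg (by linarith) hMsq0) (mul_nonneg (by positivity) hM30)
        have e1 : ((9/4 + β + β^2) * M n ^ 2) ^ 3 = (9/4 + β + β^2)^3 * M n ^ 6 := by ring
        have e2 : (2*(9/4 + β + β^2)^2 * M n ^ 3) ^ 2 = 4 * ((9/4 + β + β^2)^4 * M n ^ 6) := by
          ring
        rw [e1, e2]
        have hb3 : (9/4 + β + β^2)^3 ≤ (9/4 + β + β^2)^4 :=
          pow_le_pow_right₀ hcb1 (by norm_num)
        have key : (9/4 + β + β^2)^3 * M n ^ 6 ≤ (9/4 + β + β^2)^4 * M n ^ 6 :=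
          mul_le_mul_of_nonneg_right hb3 (by positivity)
        nlinarith [mul_nonneg (pow_nonneg (by linarith : (0:ℝ) ≤ 9/4 + β + β^2) 4)
          (pow_nonneg (hM0 n) 6)]
      calc Y (n+2) ^ ((3:ℝ)/2) ≤ 2*(9/4 + β + β^2)^2 * M n ^ 3 := le_trans h1 h2
        _ ≤ A * M n ^ 3 := mul_le_mul_of_nonneg_right hAc hM30
  -- the two-step induction
  obtain ⟨s, hsdef⟩ : ∃ s:ℝ, s = Real.sqrt A := ⟨_, rfl⟩
  have hsA : s ^ 2 = A := by rw [hsdef]; exact Real.sq_sqrt hA0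
  have hs0 : (0:ℝ) ≤ s := by rw [hsdef]; exact Real.sqrt_nonneg A
  have hs1 : (1:ℝ) ≤ s := by nlinarith
  obtain ⟨T, hTdef⟩ : ∃ T:ℝ, T = s * max (M 0) (M 1) + 2 := ⟨_, rfl⟩
  have hmax0 : (0:ℝ) ≤ max (M 0) (M 1) := le_trans (hM0 0) (le_max_left _ _)
  have hT2 : (2:ℝ) ≤ T := by rw [hTdef]; nlinarith
  have hT1 : (1:ℝ) ≤ T := by linarith
  have hT0 : (0:ℝ) ≤ T := by linarith
  have hsqrt3 : (1:ℝ) ≤ Real.sqrt 3 := by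
    rw [show (1:ℝ) = Real.sqrt 1 from (Real.sqrt_one).symm]
    exact Real.sqrt_le_sqrt (by norm_num)
  have main : ∀ n, s * M n ≤ T ^ (Real.sqrt 3 ^ n) := by
    intro n
    induction n using Nat.twoStepInduction with
    | zero =>
      rw [pow_zero, Real.rpow_one, hTdef]
      have h := le_max_left (M 0) (M 1)
      nlinarith
    | one =>
      have h1 : s * M 1 ≤ T := by
        rw [hTdef]; have := le_max_right (M 0) (M 1); nlinarith
      calc s * M 1 ≤ T := h1
        _ = T ^ (1:ℝ) := (Real.rpow_one T).symm
        _ ≤ T ^ (Real.sqrt 3 ^ 1) := by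
            apply Real.rpow_le_rpow_of_exponent_le hT1
            rw [pow_one]; exact hsqrt3
    | more n ih1 ih2 =>
      have h1 : s * M (n+2) ≤ s * (A * M n ^ 3) :=
        mul_le_mul_of_nonneg_left (hstep2 n) hs0
      have h2 : s * (A * M n ^ 3) = (s * M n) ^ 3 := by rw [← hsA]; ring
      have h3 : (s * M n) ^ 3 ≤ (T ^ (Real.sqrt 3 ^ n)) ^ 3 :=
        pow_le_pow_left₀ (mul_nonneg hs0 (hM0 n)) ih1 3
      have h4 : (T ^ (Real.sqrt 3 ^ n)) ^ 3 = T ^ (Real.sqrt 3 ^ (n+2)) := by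
        rw [← Real.rpow_natCast (T ^ (Real.sqrt 3 ^ n)) 3, ← Real.rpow_mul hT0]
        congr 1
        have h5 : Real.sqrt 3 ^ 2 = 3 := Real.sq_sqrt (by norm_num)
        rw [pow_succ, pow_succ, mul_assoc, ← sq, h5]
        norm_num
      calc s * M (n+2) ≤ s * (A * M n ^ 3) := h1
        _ = (s * M n) ^ 3 := h2
        _ ≤ (T ^ (Real.sqrt 3 ^ n)) ^ 3 := h3
        _ = T ^ (Real.sqrt 3 ^ (n+2)) := h4
  refine ⟨T, hT2, fun n => ?_⟩
  have h := main n
  nlinarith [hM0 n]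

set_option maxHeartbeats 1000000 in
/-- there exist `ε > 0` and `R₀ > 1/ε¹⁰` such that for all
`R > R₀`: for every `w ∈ K⁺` there is `M̃(w) > 1` with `Mₙ ≤ M̃(w)^{(√3)ⁿ}`
for all `n ≥ 0`; consequently there is `C(w) > 1` such that
`‖Hⁿ(w)‖ ≤ C(w)^{(√3)ⁿ}` for all `n ≥ 0`. -/
theorem stmt13 (a b : ℂ) (ha : a ≠ 0) (hb : b ≠ 0) :
    ∃ ε > (0 : ℝ), ∃ R₀ > 1 / ε ^ 10, ∀ R > R₀, ∀ w ∈ Kplus a b ε R,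
      (∃ M > (1 : ℝ), ∀ n : ℕ,
        Mseq a b ε R w n ≤ M ^ (Real.sqrt 3 ^ n)) ∧
      (∃ C > (1 : ℝ), ∀ n : ℕ,
        ‖(H a b)^[n] w‖ ≤ C ^ (Real.sqrt 3 ^ n)) := by
  refine ⟨1, one_pos, 2, by norm_num, fun R hR w hw => ?_⟩
  have hR2 : (2:ℝ) < R := hR
  -- notation
  have hα : (0:ℝ) < ‖a‖ := norm_pos_iff.mpr ha
  have hβ : (0:ℝ) ≤ ‖b‖ := norm_nonneg b
  have hX0 : ∀ n, (0:ℝ) ≤ ‖((H a b)^[n] w).1‖ := fun n => norm_nonneg _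
  have hY0 : ∀ n, (0:ℝ) ≤ ‖((H a b)^[n] w).2.1‖ := fun n => norm_nonneg _
  have hZ0 : ∀ n, (0:ℝ) ≤ ‖(a * ((H a b)^[n] w).2.2)‖ := fun n =>
    norm_nonneg _
  have hM1 : ∀ n, (1:ℝ) ≤ Mseq a b 1 R w n := fun n =>
    le_trans (by linarith) (le_max_left _ _)
  have hM0 : ∀ n, (0:ℝ) ≤ Mseq a b 1 R w n := fun n => le_trans zero_le_one (hM1 n)
  have hXY : ∀ n, ‖((H a b)^[n] w).1‖ * ‖((H a b)^[n] w).2.1‖ ≤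
      Mseq a b 1 R w n := by
    simp only [Kplus, Uplus, Set.mem_compl_iff, Set.mem_iUnion, Set.mem_preimage, Vminus,
      Set.mem_setOf_eq, not_exists, not_lt] at hw
    intro n
    have h := hw n
    rw [norm_mul] at h
    simpa [Mseq] using h
  have hZM : ∀ n, 2 * ‖(a * ((H a b)^[n] w).2.2)‖ ≤ Mseq a b 1 R w n := fun n => by
    simp only [Mseq]
    exact le_trans (le_max_left _ _) (le_max_right _ _)
  have hX32 : ∀ n, ‖((H a b)^[n] w).1‖ ^ ((3:ℝ)/2) ≤ Mseq a b 1 R w n := fun n => by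
    simp only [Mseq]
    exact le_trans (le_max_left _ _) (le_trans (le_max_right _ _) (le_max_right _ _))
  have hY32 : ∀ n, ‖((H a b)^[n] w).2.1‖ ^ ((3:ℝ)/2) ≤ Mseq a b 1 R w n := fun n => by
    simp only [Mseq, one_div_one, one_mul]
    exact le_trans (le_max_right _ _) (le_trans (le_max_right _ _) (le_max_right _ _))
  have hXs : ∀ n, ‖((H a b)^[n+1] w).1‖ ≤
      ‖((H a b)^[n] w).1‖ * ‖((H a b)^[n] w).2.1‖ +
        ‖(a * ((H a b)^[n] w).2.2)‖ := fun n => by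
    rw [Function.iterate_succ_apply']
    refine le_trans (norm_add_le _ _) ?_
    rw [norm_mul]
  have hYs : ∀ n, ‖((H a b)^[n+1] w).2.1‖ ≤
      ‖((H a b)^[n] w).1‖ ^ 2 + ‖b‖ * ‖((H a b)^[n] w).2.1‖ :=
    fun n => by
    rw [Function.iterate_succ_apply']
    refine le_trans (norm_add_le _ _) ?_
    rw [norm_mul, norm_pow]
  have hZs : ∀ n, ‖(a * ((H a b)^[n+1] w).2.2)‖ =
      ‖a‖ * ‖((H a b)^[n] w).1‖ := fun n => by
    rw [Function.iterate_succ_apply', norm_mul]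
    rfl
  have hMle : ∀ n, Mseq a b 1 R w (n+1) ≤ max (Mseq a b 1 R w n)
      (max (2 * ‖(a * ((H a b)^[n+1] w).2.2)‖)
        (max (‖((H a b)^[n+1] w).1‖ ^ ((3:ℝ)/2))
          (‖((H a b)^[n+1] w).2.1‖ ^ ((3:ℝ)/2)))) := fun n => by
    simp only [Mseq, one_div_one, one_mul]
    apply max_le
    · exact le_trans (le_max_left _ _) (le_max_left _ _)
    · exact le_max_right _ _
  obtain ⟨T, hT2, hT⟩ := growth
    (fun n => ‖((H a b)^[n] w).1‖)
    (fun n => ‖((H a b)^[n] w).2.1‖)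
    (fun n => ‖(a * ((H a b)^[n] w).2.2)‖)
    (fun n => Mseq a b 1 R w n)
    (‖a‖) (‖b‖) hα.le hβ hX0 hY0 hZ0 hM1 hXY hZM hX32 hY32 hXs hYs hZs hMle
  have hT1 : (1:ℝ) < T := by linarith
  have hT0 : (0:ℝ) ≤ T := by linarith
  constructor
  · exact ⟨T, hT1, fun n => hT n⟩
  -- second part
  have hsqrt3 : (1:ℝ) ≤ Real.sqrt 3 := by
    rw [show (1:ℝ) = Real.sqrt 1 from (Real.sqrt_one).symm]
    exact Real.sqrt_le_sqrt (by norm_num)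
  obtain ⟨c, hcdef⟩ : ∃ c:ℝ, c = 1 + 1/(2*‖a‖) := ⟨_, rfl⟩
  have hc1 : (1:ℝ) < c := by
    rw [hcdef]
    have : (0:ℝ) < 1/(2*‖a‖) := by positivity
    linarith
  have hc0 : (0:ℝ) ≤ c := by linarith
  have hXle : ∀ n, ‖((H a b)^[n] w).1‖ ≤ Mseq a b 1 R w n := fun n =>
    aux_le_of_pow32 (hX0 n) (hM1 n) (hX32 n)
  have hYle : ∀ n, ‖((H a b)^[n] w).2.1‖ ≤ Mseq a b 1 R w n := fun n =>
    aux_le_of_pow32 (hY0 n) (hM1 n) (hY32 n)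
  have hnorm : ∀ n, ‖(H a b)^[n] w‖ ≤ c * Mseq a b 1 R w n := by
    intro n
    have e : ‖(H a b)^[n] w‖ = max (‖((H a b)^[n] w).1‖)
        (max (‖((H a b)^[n] w).2.1‖) (‖((H a b)^[n] w).2.2‖)) := by
      simp [Prod.norm_def]
    rw [e]
    have hcM : Mseq a b 1 R w n ≤ c * Mseq a b 1 R w n := by nlinarith [hM0 n]
    apply max_le
    · exact le_trans (hXle n) hcM
    apply max_le
    · exact le_trans (hYle n) hcM
    · -- |z| ≤ c * M
      have h1 : 2 * (‖a‖ * ‖((H a b)^[n] w).2.2‖) ≤ Mseq a b 1 R w n := by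
        have := hZM n; rwa [norm_mul] at this
      have h2 : ‖((H a b)^[n] w).2.2‖ * (2 * ‖a‖) ≤
          (c * Mseq a b 1 R w n) * (2 * ‖a‖) := by
        have e1 : (c * Mseq a b 1 R w n) * (2 * ‖a‖)
            = 2 * ‖a‖ * Mseq a b 1 R w n + Mseq a b 1 R w n := by
          rw [hcdef]; field_simp
        rw [e1]
        nlinarith [mul_nonneg (mul_nonneg (by norm_num : (0:ℝ) ≤ 2) hα.le) (hM0 n)]
      exact le_of_mul_le_mul_right h2 (by positivity)
  refine ⟨c * T, by nlinarith, fun n => ?_⟩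
  have r1 : (1:ℝ) ≤ Real.sqrt 3 ^ n := one_le_pow₀ hsqrt3
  have hcr : c ≤ c ^ (Real.sqrt 3 ^ n) := by
    calc c = c ^ (1:ℝ) := (Real.rpow_one c).symm
      _ ≤ c ^ (Real.sqrt 3 ^ n) := Real.rpow_le_rpow_of_exponent_le hc1.le r1
  calc ‖(H a b)^[n] w‖ ≤ c * Mseq a b 1 R w n := hnorm n
    _ ≤ c * T ^ (Real.sqrt 3 ^ n) := mul_le_mul_of_nonneg_left (hT n) hc0
    _ ≤ c ^ (Real.sqrt 3 ^ n) * T ^ (Real.sqrt 3 ^ n) :=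
        mul_le_mul_of_nonneg_right hcr (Real.rpow_nonneg hT0 _)
    _ = (c * T) ^ (Real.sqrt 3 ^ n) := (Real.mul_rpow hc0 hT0).symm
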